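/- Let p be a prime, F a field of characteristic p, g a Lie algebra over F, and a₁, ..., a_p elements of g. Then in the universal enveloping algebra U(g), Σ_{σ ∈ S_p} a_{σ(1)} a_{σ(2)} ⋯ a_{σ(p)} = Σ_{σ ∈ S_p, σ(1)=1} [[⋯[[a_{σ(1)}, a_{σ(2)}], a_{σ(3)}], ⋯], a_{σ(p)}], where the sum on the right is over permutations fixing 1 and the bracket is the Lie bracket computed in g and viewed inside U(g). -/

import Mathlib

open UniversalEnvelopingAlgebra

attribute [local instance 100] LieRing.ofAssociativeRing

/-- The left-nested iterated Lie bracket `[[⋯[[x₁,x₂],x₃],⋯],x_r]` of a list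
`[x₁, …, x_r]` (and `0` for the empty list). -/
def nestedBracket {L : Type*} [LieRing L] : List L → L
  | [] => 0
  | x :: xs => xs.foldl (fun u v => ⁅u, v⁆) x

section CMN

open Equiv Equiv.Perm


lemma cycleRange_mk_of_lt {n : ℕ} (k : Fin (n+1)) (j : ℕ) (hj : j < (k:ℕ)) :
    Fin.cycleRange k ⟨j, by omega⟩ = ⟨j+1, by omega⟩ := by
  apply Fin.ext
  rw [Fin.coe_cycleRange_of_lt]
  simpa [Fin.lt_def] using hj

lemma cycleRange_mk_of_gt {n : ℕ} (k : Fin (n+1)) (j : ℕ) (hj : (k:ℕ) < j) (hj' : j < n+1) :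
    Fin.cycleRange k ⟨j, hj'⟩ = ⟨j, hj'⟩ :=
  Fin.cycleRange_of_gt (by simpa [Fin.lt_def] using hj)

/-- Splitting a word permuted by a cycle range. -/
lemma ofFn_comp_cycleRange {α : Type*} {n : ℕ} (h : Fin (n+1) → α) (k : Fin (n+1)) :
    List.ofFn (h ∘ (Fin.cycleRange k)) =
      (List.ofFn (h ∘ Fin.succ)).take k ++ h 0 :: (List.ofFn (h ∘ Fin.succ)).drop k := by
  have hk := Nat.le_of_lt_succ k.isLt
  apply List.ext_getElem
  · simp [Nat.min_def, hk]
    omega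
  intro j hj hj'
  simp only [List.getElem_ofFn, Function.comp_apply]
  rcases lt_trichotomy j (k:ℕ) with hlt | heq | hgt
  · rw [List.getElem_append_left (by simp [Nat.min_def, hk]; omega)]
    rw [List.getElem_take, List.getElem_ofFn, cycleRange_mk_of_lt k j hlt]
    rfl
  · rw [List.getElem_append_right (by simp [Nat.min_def, hk]; omega)]
    have hlen : (List.take (k:ℕ) (List.ofFn (h ∘ Fin.succ))).length = (k:ℕ) := by
      simp [Nat.min_def, hk]
    simp only [hlen, heq]
    simp only [Nat.sub_self, List.getElem_cons_zero]
    have : (⟨(k:ℕ), by omega⟩ : Fin (n+1)) = k := by apply Fin.ext; rfl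
    rw [this, Fin.cycleRange_self]
  · rw [List.getElem_append_right (by simp [Nat.min_def, hk]; omega)]
    have hlen : (List.take (k:ℕ) (List.ofFn (h ∘ Fin.succ))).length = (k:ℕ) := by
      simp [Nat.min_def, hk]
    have hj1 : j < n + 1 := by simpa using hj
    simp only [hlen]
    obtain ⟨d, hd⟩ : ∃ d, j - (k:ℕ) = d + 1 := ⟨j - k - 1, by omega⟩
    simp only [hd]
    simp only [List.getElem_cons_succ, List.getElem_drop, List.getElem_ofFn]
    rw [cycleRange_mk_of_gt k j hgt hj1]
    have : Fin.succ ⟨(k:ℕ) + d, by simp at hj ⊢; omega⟩ = ⟨j, hj1⟩ := by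
      apply Fin.ext; simp [Fin.val_succ]; omega
    simp only [Function.comp_apply, this]

lemma take_ofFn_comp_cycleRange (h : Fin (n+1) → α) (k : Fin (n+1)) :
    (List.ofFn (h ∘ (Fin.cycleRange k))).take k = (List.ofFn (h ∘ Fin.succ)).take k := by
  rw [ofFn_comp_cycleRange]
  generalize hu : (List.ofFn (h ∘ Fin.succ)).take (k:ℕ) = u
  have hlen : u.length = (k:ℕ) := by
    rw [← hu]; simp [Nat.le_of_lt_succ k.isLt]
  rw [← hlen, List.take_left]

lemma drop_ofFn_comp_cycleRange (h : Fin (n+1) → α) (k : Fin (n+1)) :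
    (List.ofFn (h ∘ (Fin.cycleRange k))).drop k =
      h 0 :: (List.ofFn (h ∘ Fin.succ)).drop k := by
  rw [ofFn_comp_cycleRange]
  generalize hu : (List.ofFn (h ∘ Fin.succ)).take (k:ℕ) = u
  have hlen : u.length = (k:ℕ) := by
    rw [← hu]; simp [Nat.le_of_lt_succ k.isLt]
  rw [← hlen, List.drop_left]


variable {A : Type*} [Ring A]

def cmul (u v : A) : A := u * v - v * u

def trm {n : ℕ} (f : Fin n → A) (x : A) (π : Equiv.Perm (Fin n)) (k : ℕ) : A :=
  ((List.ofFn (f ∘ π)).take k).reverse.prod * (x * ((List.ofFn (f ∘ π)).drop k).prod)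

lemma sum_pascal (n : ℕ) (T : ℕ → A) :
    ∑ k ∈ Finset.range (n+2), (-1:A)^k * ((n+1).choose k : ℕ) * T k
    = (∑ k ∈ Finset.range (n+1), (-1:A)^k * (n.choose k : ℕ) * T k)
      + ∑ k ∈ Finset.range (n+1), (-1:A)^(k+1) * (n.choose k : ℕ) * T (k+1) := by
  rw [Finset.sum_range_succ' _ (n+1),
    Finset.sum_range_succ' (fun k => (-1:A)^k * (n.choose k : ℕ) * T k) n]
  have h1 : ∀ k ∈ Finset.range (n+1), (-1:A)^(k+1) * ((n+1).choose (k+1) : ℕ) * T (k+1)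
      = (-1:A)^(k+1) * (n.choose k : ℕ) * T (k+1)
        + (-1:A)^(k+1) * (n.choose (k+1) : ℕ) * T (k+1) := by
    intro k _
    rw [Nat.choose_succ_succ]
    push_cast
    rw [mul_add, add_mul]
  rw [Finset.sum_congr rfl h1, Finset.sum_add_distrib]
  have h2 : ∑ k ∈ Finset.range (n+1), (-1:A)^(k+1) * (n.choose (k+1) : ℕ) * T (k+1)
      = ∑ k ∈ Finset.range n, (-1:A)^(k+1) * (n.choose (k+1) : ℕ) * T (k+1) := by
    rw [Finset.sum_range_succ, Nat.choose_succ_self]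
    simp
  rw [h2]
  simp [Nat.choose_zero_right]
  abel

lemma ofFn_decomposeFin {n : ℕ} (f : Fin (n+1) → A) (i : Fin (n+1)) (ρ : Equiv.Perm (Fin n)) :
    List.ofFn (f ∘ (Equiv.Perm.decomposeFin.symm (i, ρ))) =
      f i :: List.ofFn ((f ∘ (Equiv.swap 0 i) ∘ Fin.succ) ∘ ρ) := by
  rw [List.ofFn_succ]
  congr 1
  · simp
  · congr 1
    funext j
    simp [Equiv.Perm.decomposeFin_symm_apply_succ]

lemma trm_split {n : ℕ} (f : Fin (n+1) → A) (x : A) (i : Fin (n+1)) (ρ : Equiv.Perm (Fin n))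
    (k : Fin (n+1)) :
    trm (f ∘ (Equiv.swap 0 i) ∘ Fin.succ) (cmul x (f i)) ρ (k:ℕ)
    = trm f x (Equiv.Perm.decomposeFin.symm (i,ρ) * Fin.cycleRange k) (k:ℕ)
      - trm f x (Equiv.Perm.decomposeFin.symm (i,ρ)) ((k:ℕ)+1) := by
  set σ := Equiv.Perm.decomposeFin.symm (i,ρ) with hσ
  have hcomp : f ∘ ⇑(σ * Fin.cycleRange k) = (f ∘ ⇑σ) ∘ ⇑(Fin.cycleRange k) := by
    funext j; simp [Equiv.Perm.mul_apply]
  have hsucc : (f ∘ ⇑σ) ∘ Fin.succ = (f ∘ (Equiv.swap 0 i) ∘ Fin.succ) ∘ ⇑ρ := by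
    funext j; simp [hσ, Equiv.Perm.decomposeFin_symm_apply_succ]
  have hzero : (f ∘ ⇑σ) 0 = f i := by simp [hσ]
  have hlist : List.ofFn (f ∘ ⇑σ) = f i :: List.ofFn ((f ∘ (Equiv.swap 0 i) ∘ Fin.succ) ∘ ⇑ρ) := by
    rw [hσ]; exact ofFn_decomposeFin f i ρ
  unfold trm
  rw [hcomp, take_ofFn_comp_cycleRange, drop_ofFn_comp_cycleRange, hsucc, hzero, hlist,
    List.take_succ_cons, List.drop_succ_cons]
  simp only [cmul, List.reverse_cons, List.prod_append, List.prod_cons, List.prod_nil]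
  noncomm_ring

lemma ML : ∀ (n : ℕ) (f : Fin n → A) (x : A),
    ∑ π : Equiv.Perm (Fin n), (List.ofFn (f ∘ π)).foldl cmul x
    = ∑ π : Equiv.Perm (Fin n), ∑ k ∈ Finset.range (n+1),
        (-1:A)^k * (n.choose k : ℕ) * trm f x π k := by
  intro n
  induction n with
  | zero =>
    intro f x
    simp [trm, List.ofFn_zero]
  | succ n ih =>
    intro f x
    rw [← Equiv.sum_comp (Equiv.Perm.decomposeFin.symm)
        (fun π => (List.ofFn (f ∘ π)).foldl cmul x), Fintype.sum_prod_type]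
    have hA : ∀ (i : Fin (n+1)) (ρ : Equiv.Perm (Fin n)),
        (List.ofFn (f ∘ (Equiv.Perm.decomposeFin.symm (i, ρ)))).foldl cmul x
        = (List.ofFn ((f ∘ (Equiv.swap 0 i) ∘ Fin.succ) ∘ ρ)).foldl cmul (cmul x (f i)) := by
      intro i ρ; rw [ofFn_decomposeFin, List.foldl_cons]
    simp only [hA]
    have hB : ∀ (i : Fin (n+1)),
        ∑ ρ : Equiv.Perm (Fin n),
          (List.ofFn ((f ∘ (Equiv.swap 0 i) ∘ Fin.succ) ∘ ρ)).foldl cmul (cmul x (f i))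
        = ∑ ρ : Equiv.Perm (Fin n), ∑ k : Fin (n+1),
            ((-1:A)^(k:ℕ) * (n.choose (k:ℕ) : ℕ) * trm f x (Equiv.Perm.decomposeFin.symm (i,ρ) * Fin.cycleRange k) (k:ℕ)
             - (-1:A)^(k:ℕ) * (n.choose (k:ℕ) : ℕ) * trm f x (Equiv.Perm.decomposeFin.symm (i,ρ)) ((k:ℕ)+1)) := by
      intro i
      rw [ih (f ∘ (Equiv.swap 0 i) ∘ Fin.succ) (cmul x (f i))]
      apply Finset.sum_congr rfl
      intro ρ _
      rw [← Fin.sum_univ_eq_sum_range]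
      apply Finset.sum_congr rfl
      intro k _
      rw [trm_split, mul_sub]
    simp only [hB, Finset.sum_sub_distrib]
    -- S1 - S2
    have hS2 : ∑ i : Fin (n+1), ∑ ρ : Equiv.Perm (Fin n), ∑ k : Fin (n+1),
          (-1:A)^(k:ℕ) * (n.choose (k:ℕ) : ℕ) * trm f x (Equiv.Perm.decomposeFin.symm (i,ρ)) ((k:ℕ)+1)
        = ∑ π : Equiv.Perm (Fin (n+1)), ∑ k : Fin (n+1),
          (-1:A)^(k:ℕ) * (n.choose (k:ℕ) : ℕ) * trm f x π ((k:ℕ)+1) := by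
      have e1 := Fintype.sum_prod_type
        (f := fun z : Fin (n+1) × Equiv.Perm (Fin n) =>
          ∑ k : Fin (n+1), (-1:A)^(k:ℕ) * (n.choose (k:ℕ) : ℕ) *
            trm f x (Equiv.Perm.decomposeFin.symm z) ((k:ℕ)+1))
      rw [← e1]
      exact Equiv.sum_comp (Equiv.Perm.decomposeFin.symm)
        (fun π => ∑ k : Fin (n+1), (-1:A)^(k:ℕ) * (n.choose (k:ℕ) : ℕ) * trm f x π ((k:ℕ)+1))
    have hS1 : ∑ i : Fin (n+1), ∑ ρ : Equiv.Perm (Fin n), ∑ k : Fin (n+1),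
          (-1:A)^(k:ℕ) * (n.choose (k:ℕ) : ℕ) * trm f x (Equiv.Perm.decomposeFin.symm (i,ρ) * Fin.cycleRange k) (k:ℕ)
        = ∑ π : Equiv.Perm (Fin (n+1)), ∑ k : Fin (n+1),
          (-1:A)^(k:ℕ) * (n.choose (k:ℕ) : ℕ) * trm f x π (k:ℕ) := by
      have swap1 : ∀ i : Fin (n+1), ∑ ρ : Equiv.Perm (Fin n), ∑ k : Fin (n+1),
            (-1:A)^(k:ℕ) * (n.choose (k:ℕ) : ℕ) * trm f x (Equiv.Perm.decomposeFin.symm (i,ρ) * Fin.cycleRange k) (k:ℕ)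
          = ∑ k : Fin (n+1), ∑ ρ : Equiv.Perm (Fin n),
            (-1:A)^(k:ℕ) * (n.choose (k:ℕ) : ℕ) * trm f x (Equiv.Perm.decomposeFin.symm (i,ρ) * Fin.cycleRange k) (k:ℕ) :=
        fun i => Finset.sum_comm
      simp only [swap1]
      rw [Finset.sum_comm]
      have inner : ∀ k : Fin (n+1), ∑ i : Fin (n+1), ∑ ρ : Equiv.Perm (Fin n),
            (-1:A)^(k:ℕ) * (n.choose (k:ℕ) : ℕ) * trm f x (Equiv.Perm.decomposeFin.symm (i,ρ) * Fin.cycleRange k) (k:ℕ)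
          = ∑ π : Equiv.Perm (Fin (n+1)),
            (-1:A)^(k:ℕ) * (n.choose (k:ℕ) : ℕ) * trm f x π (k:ℕ) := by
        intro k
        have e1 := Fintype.sum_prod_type
          (f := fun z : Fin (n+1) × Equiv.Perm (Fin n) =>
            (-1:A)^(k:ℕ) * (n.choose (k:ℕ) : ℕ) *
              trm f x (Equiv.Perm.decomposeFin.symm z * Fin.cycleRange k) (k:ℕ))
        rw [← e1]
        exact Equiv.sum_comp
          ((Equiv.Perm.decomposeFin.symm).trans (Equiv.mulRight (Fin.cycleRange k)))
          (fun π => (-1:A)^(k:ℕ) * (n.choose (k:ℕ) : ℕ) * trm f x π (k:ℕ))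
      simp only [inner]
      exact Finset.sum_comm
    rw [hS1, hS2, ← Finset.sum_sub_distrib]
    apply Finset.sum_congr rfl
    intro π _
    rw [show n + 1 + 1 = n + 2 from rfl, sum_pascal n (trm f x π)]
    rw [Fin.sum_univ_eq_sum_range
        (fun k => (-1:A)^k * (n.choose k : ℕ) * trm f x π k),
      Fin.sum_univ_eq_sum_range
        (fun k => (-1:A)^k * (n.choose k : ℕ) * trm f x π (k+1))]
    have : ∀ k ∈ Finset.range (n+1), (-1:A)^(k+1) * (n.choose k : ℕ) * trm f x π (k+1)
        = -((-1:A)^k * (n.choose k : ℕ) * trm f x π (k+1)) := by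
      intro k _; rw [pow_succ]; ring_nf; noncomm_ring
    rw [Finset.sum_congr rfl this, Finset.sum_neg_distrib]
    abel


/-- Reversal of `{0, …, k}` in `Fin (n+1)`. -/
def prRev (n : ℕ) : ℕ → Equiv.Perm (Fin (n+1))
  | 0 => 1
  | (k+1) => if h : k+1 < n+1 then Fin.cycleRange ⟨k+1, h⟩ * prRev n k else 1

lemma prRev_apply (n k : ℕ) (hk : k ≤ n) (j : Fin (n+1)) :
    prRev n k j = if h : (j:ℕ) ≤ k then ⟨k - j, by omega⟩ else j := by
  induction k with
  | zero =>
    simp only [prRev, Equiv.Perm.one_apply]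
    by_cases h : (j:ℕ) ≤ 0
    · rw [dif_pos h]; apply Fin.ext; simp; exact Fin.ext (by simp only [Fin.val_zero]; omega)
    · rw [dif_neg h]
  | succ k ihk =>
    have hk' : k ≤ n := by omega
    have hlt : k + 1 < n + 1 := by omega
    simp only [prRev, dif_pos hlt, Equiv.Perm.mul_apply]
    rw [ihk hk']
    by_cases h1 : (j:ℕ) ≤ k
    · rw [dif_pos h1, dif_pos (by omega : (j:ℕ) ≤ k+1)]
      have h2 : k - (j:ℕ) < k + 1 := by omega
      have := Fin.cycleRange_of_lt (j := (⟨k+1, hlt⟩ : Fin (n+1)))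
        (i := ⟨k - j, by omega⟩) (by simp [Fin.lt_def])
      rw [this]
      apply Fin.ext
      rw [Fin.val_add_one_of_lt (by simp [Fin.lt_def, Fin.last]; omega)]
      simp
      omega
    · rw [dif_neg h1]
      by_cases h2 : (j:ℕ) = k+1
      · rw [dif_pos (by omega)]
        have hj : j = ⟨k+1, hlt⟩ := by apply Fin.ext; simpa using h2
        subst hj
        rw [Fin.cycleRange_self]
        apply Fin.ext
        simp
      · rw [dif_neg (by omega)]
        exact Fin.cycleRange_of_gt (by simp [Fin.lt_def]; omega)

lemma prRev_self (n k : ℕ) (hk : k ≤ n) : prRev n k ⟨k, by omega⟩ = 0 := by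
  rw [prRev_apply n k hk, dif_pos (by simp)]
  apply Fin.ext
  simp

/-- The bijection `Fin (n+1) × Perm (Fin n) ≃ Perm (Fin (n+1))` suited to reading off the
position of `0` and the remaining word. -/
def lastEquiv (n : ℕ) : Fin (n+1) × Equiv.Perm (Fin n) ≃ Equiv.Perm (Fin (n+1)) where
  toFun z := Equiv.Perm.decomposeFin.symm (0, z.2) * prRev n z.1
  invFun τ := (τ⁻¹ 0, (Equiv.Perm.decomposeFin (τ * (prRev n ((τ⁻¹ 0 : Fin (n+1)) : ℕ))⁻¹)).2)
  left_inv := by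
    rintro ⟨k, π⟩
    have hσ0 : (Equiv.Perm.decomposeFin.symm (0, π)) 0 = 0 :=
      Equiv.Perm.decomposeFin_symm_apply_zero _ _
    have hr : (prRev n (k:ℕ))⁻¹ 0 = k := by
      have h := prRev_self n (k:ℕ) (Nat.le_of_lt_succ k.isLt)
      have h2 : prRev n (k:ℕ) k = 0 := by
        convert h using 2
      rw [← h2]; exact Equiv.symm_apply_apply _ _
    have h1 : (Equiv.Perm.decomposeFin.symm (0, π) * prRev n (k:ℕ))⁻¹ 0 = k := by
      rw [mul_inv_rev, Equiv.Perm.mul_apply]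
      have hinv : (Equiv.Perm.decomposeFin.symm (0, π))⁻¹ 0 = 0 := by
        conv_lhs => rw [← hσ0]
        exact Equiv.symm_apply_apply _ _
      rw [hinv, hr]
    have h2 : (Equiv.Perm.decomposeFin.symm (0, π) * prRev n (k:ℕ))
        * (prRev n (((Equiv.Perm.decomposeFin.symm (0, π) * prRev n (k:ℕ))⁻¹ 0 : Fin (n+1)) : ℕ))⁻¹
        = Equiv.Perm.decomposeFin.symm (0, π) := by
      rw [h1, mul_inv_cancel_right]
    refine Prod.ext ?_ ?_
    · exact h1
    · simp only [h2, Equiv.apply_symm_apply]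
  right_inv := by
    intro τ
    simp only
    have hr : (prRev n ((τ⁻¹ 0 : Fin (n+1)) : ℕ))⁻¹ 0 = τ⁻¹ 0 := by
      have h := prRev_self n ((τ⁻¹ 0 : Fin (n+1)) : ℕ) (Nat.le_of_lt_succ (τ⁻¹ 0).isLt)
      have h2 : prRev n ((τ⁻¹ 0 : Fin (n+1)) : ℕ) (τ⁻¹ 0) = 0 := by
        convert h using 2
      rw [Equiv.Perm.inv_eq_iff_eq]
      exact h2.symm
    set σ := τ * (prRev n ((τ⁻¹ 0 : Fin (n+1)) : ℕ))⁻¹ with hσdef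
    have hσ0 : σ 0 = 0 := by
      rw [hσdef, Equiv.Perm.mul_apply, hr]; exact Equiv.apply_symm_apply _ _
    have hfst : (Equiv.Perm.decomposeFin σ).1 = 0 := by
      have he : Equiv.Perm.decomposeFin.symm (Equiv.Perm.decomposeFin σ) = σ :=
        Equiv.symm_apply_apply _ _
      have hz : Equiv.Perm.decomposeFin.symm (Equiv.Perm.decomposeFin σ) 0
          = (Equiv.Perm.decomposeFin σ).1 :=
        Equiv.Perm.decomposeFin_symm_apply_zero
          (Equiv.Perm.decomposeFin σ).1 (Equiv.Perm.decomposeFin σ).2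
      rw [he] at hz
      exact hz.symm.trans hσ0
    have : ((0 : Fin (n+1)), (Equiv.Perm.decomposeFin σ).2) = Equiv.Perm.decomposeFin σ := by
      rw [← hfst]
    rw [this, Equiv.symm_apply_apply, hσdef, inv_mul_cancel_right]

lemma ofFn_lastEquiv {α : Type*} (n : ℕ) (b : Fin (n+1) → α) (k : Fin (n+1))
    (π : Equiv.Perm (Fin n)) :
    List.ofFn (b ∘ (lastEquiv n (k, π))) =
      ((List.ofFn ((b ∘ Fin.succ) ∘ π)).take k).reverse
        ++ b 0 :: (List.ofFn ((b ∘ Fin.succ) ∘ π)).drop k := by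
  have hk := Nat.le_of_lt_succ k.isLt
  have happ : ∀ j : Fin (n+1), (lastEquiv n (k, π)) j
      = Equiv.Perm.decomposeFin.symm (0, π) (prRev n (k:ℕ) j) := fun j => rfl
  have hsz : ∀ (x : Fin n), Equiv.Perm.decomposeFin.symm ((0 : Fin (n+1)), π) x.succ
      = (π x).succ := by
    intro x
    rw [Equiv.Perm.decomposeFin_symm_apply_succ, Equiv.swap_self, Equiv.refl_apply]
  have hlen0 : (List.take (↑k) (List.ofFn ((b ∘ Fin.succ) ∘ ⇑π))).length = (k:ℕ) := by
    simp [Nat.min_def, hk]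
  apply List.ext_getElem
  · simp [Nat.min_def, hk]
    omega
  intro j hj hj'
  have hj1 : j < n + 1 := by simpa using hj
  have hlen : (((List.ofFn ((b ∘ Fin.succ) ∘ π)).take (k:ℕ)).reverse).length = (k:ℕ) := by
    simp [Nat.min_def, hk]
  simp only [List.getElem_ofFn, Function.comp_apply, happ]
  rcases lt_trichotomy j (k:ℕ) with hlt | heq | hgt
  · rw [List.getElem_append_left (by omega)]
    rw [List.getElem_reverse]
    simp only [hlen0]
    rw [List.getElem_take, List.getElem_ofFn]
    have e1 : prRev n (k:ℕ) ⟨j, hj1⟩ = ⟨(k:ℕ) - j, by omega⟩ := by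
      rw [prRev_apply n (k:ℕ) hk, dif_pos (by simpa using hlt.le)]
    have e2 : (⟨(k:ℕ) - j, by omega⟩ : Fin (n+1)) = Fin.succ ⟨(k:ℕ) - 1 - j, by omega⟩ := by
      apply Fin.ext; simp; omega
    rw [e1, e2, hsz]
    simp only [Function.comp_apply]
  · subst heq
    rw [List.getElem_append_right (by omega)]
    simp only [hlen, Nat.sub_self, List.getElem_cons_zero]
    have e1 : prRev n (k:ℕ) ⟨(k:ℕ), hj1⟩ = 0 := by
      rw [prRev_apply n (k:ℕ) (by omega), dif_pos (by simp)]
      apply Fin.ext; simp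
    rw [e1, Equiv.Perm.decomposeFin_symm_apply_zero]
  · rw [List.getElem_append_right (by omega)]
    simp only [hlen]
    obtain ⟨d, hd⟩ : ∃ d, j - (k:ℕ) = d + 1 := ⟨j - k - 1, by omega⟩
    simp only [hd, List.getElem_cons_succ, List.getElem_drop, List.getElem_ofFn]
    have e1 : prRev n (k:ℕ) ⟨j, hj1⟩ = ⟨j, hj1⟩ := by
      rw [prRev_apply n (k:ℕ) hk, dif_neg (by simp; omega)]
    have e2 : (⟨j, hj1⟩ : Fin (n+1)) = Fin.succ ⟨(k:ℕ) + d, by omega⟩ := by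
      apply Fin.ext; simp; omega
    rw [e1, e2, hsz]
    simp only [Function.comp_apply]

lemma iota_foldl (F : Type*) [CommRing F] (g : Type*) [LieRing g] [LieAlgebra F g] :
    ∀ (l : List g) (x : g),
      ι F (l.foldl (fun u v => ⁅u, v⁆) x)
        = (l.map (fun y => (ι F : g →ₗ⁅F⁆ UniversalEnvelopingAlgebra F g) y)).foldl cmul
            ((ι F : g →ₗ⁅F⁆ UniversalEnvelopingAlgebra F g) x) := by
  intro l
  induction l with
  | nil => intro x; simp
  | cons a l ih =>
    intro x
    rw [List.foldl_cons, List.map_cons, List.foldl_cons, ih ⁅x, a⁆]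
    congr 1
    rw [LieHom.map_lie]
    rw [Ring.lie_def]
    rfl

lemma coeff_one_field (p : ℕ) (hp : p.Prime) (F : Type*) [Field F] [CharP F p]
    (n : ℕ) (hpn : p = n+1) : ∀ k, k ≤ n → ((-1:F)^k * (n.choose k : ℕ) = 1) := by
  intro k
  induction k with
  | zero => intro _; simp
  | succ k ih =>
    intro hk
    have ih' := ih (by omega)
    have hdvd : p ∣ p.choose (k+1) := Nat.Prime.dvd_choose_self hp (by omega) (by omega)
    have hzero : ((p.choose (k+1) : ℕ) : F) = 0 := by
      obtain ⟨c, hc⟩ := hdvd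
      rw [hc]
      push_cast
      rw [CharP.cast_eq_zero F p, zero_mul]
    have hps : p.choose (k+1) = n.choose k + n.choose (k+1) := by
      rw [hpn]; exact Nat.choose_succ_succ n k
    rw [hps] at hzero
    push_cast at hzero
    have hneg : ((n.choose (k+1) : ℕ) : F) = -((n.choose k : ℕ) : F) := eq_neg_of_add_eq_zero_right hzero
    rw [hneg, pow_succ]
    calc (-1:F)^k * (-1) * -((n.choose k : ℕ):F) = (-1:F)^k * (n.choose k : ℕ) := by ring
    _ = 1 := ih'

end CMN

theorem statement6 (p : ℕ) (hp : p.Prime) (F : Type*) [Field F] [CharP F p]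
    (g : Type*) [LieRing g] [LieAlgebra F g] (a : Fin p → g) :
    ∑ σ : Equiv.Perm (Fin p),
        (List.ofFn fun i => (ι F : g →ₗ⁅F⁆ UniversalEnvelopingAlgebra F g)
          (a (σ i))).prod =
      ∑ σ ∈ Finset.univ.filter
          (fun σ : Equiv.Perm (Fin p) => σ ⟨0, hp.pos⟩ = ⟨0, hp.pos⟩),
        (ι F : g →ₗ⁅F⁆ UniversalEnvelopingAlgebra F g)
          (nestedBracket (List.ofFn fun i => a (σ i))) := by
  obtain ⟨n, rfl⟩ := Nat.exists_eq_succ_of_ne_zero hp.ne_zero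
  classical
  set A' := UniversalEnvelopingAlgebra F g with hA'
  set b : Fin (n+1) → A' := fun i => ι F (a i) with hb
  set f : Fin n → A' := fun i => b i.succ with hf
  have hzero : (⟨0, hp.pos⟩ : Fin (n+1)) = 0 := rfl
  -- Step 1: rewrite the right-hand side as a sum of commutator folds
  have hRHS : (∑ σ ∈ Finset.univ.filter
          (fun σ : Equiv.Perm (Fin (n+1)) => σ ⟨0, hp.pos⟩ = ⟨0, hp.pos⟩),
        (ι F : g →ₗ⁅F⁆ UniversalEnvelopingAlgebra F g)
          (nestedBracket (List.ofFn fun i => a (σ i))))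
      = ∑ π : Equiv.Perm (Fin n), (List.ofFn (f ∘ π)).foldl cmul (b 0) := by
    apply Finset.sum_bij'
      (i := fun σ _ => (Equiv.Perm.decomposeFin σ).2)
      (j := fun π _ => Equiv.Perm.decomposeFin.symm (0, π))
    · intro σ hσ
      exact Finset.mem_univ _
    · intro π hπ
      simp only [Finset.mem_filter, Finset.mem_univ, true_and, hzero]
      exact Equiv.Perm.decomposeFin_symm_apply_zero _ _
    · -- left inverse
      intro σ hσ
      simp only [Finset.mem_filter, Finset.mem_univ, true_and, hzero] at hσ
      have hz : Equiv.Perm.decomposeFin.symm (Equiv.Perm.decomposeFin σ) 0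
          = (Equiv.Perm.decomposeFin σ).1 :=
        Equiv.Perm.decomposeFin_symm_apply_zero
          (Equiv.Perm.decomposeFin σ).1 (Equiv.Perm.decomposeFin σ).2
      rw [Equiv.symm_apply_apply] at hz
      have hfst : (Equiv.Perm.decomposeFin σ).1 = 0 := hz.symm.trans hσ
      have : ((0 : Fin (n+1)), (Equiv.Perm.decomposeFin σ).2)
          = Equiv.Perm.decomposeFin σ := by rw [← hfst]
      rw [this, Equiv.symm_apply_apply]
    · -- right inverse
      intro π hπ
      rw [Equiv.apply_symm_apply]
    · -- values agree
      intro σ hσ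
      simp only [Finset.mem_filter, Finset.mem_univ, true_and, hzero] at hσ
      -- σ = decomposeFin.symm (0, π)
      have hz : Equiv.Perm.decomposeFin.symm (Equiv.Perm.decomposeFin σ) 0
          = (Equiv.Perm.decomposeFin σ).1 :=
        Equiv.Perm.decomposeFin_symm_apply_zero
          (Equiv.Perm.decomposeFin σ).1 (Equiv.Perm.decomposeFin σ).2
      rw [Equiv.symm_apply_apply] at hz
      have hfst : (Equiv.Perm.decomposeFin σ).1 = 0 := hz.symm.trans hσ
      set π := (Equiv.Perm.decomposeFin σ).2 with hπdef
      have hσeq : σ = Equiv.Perm.decomposeFin.symm (0, π) := by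
        have : ((0 : Fin (n+1)), π) = Equiv.Perm.decomposeFin σ := by
          rw [hπdef, ← hfst]
        rw [this, Equiv.symm_apply_apply]
      have hword : (List.ofFn fun i => a (σ i))
          = a 0 :: List.ofFn (fun j => a ((π j).succ)) := by
        rw [List.ofFn_succ]
        congr 1
        · rw [hσeq]
          rw [show (Equiv.Perm.decomposeFin.symm ((0 : Fin (n+1)), π)) 0 = 0 from
            Equiv.Perm.decomposeFin_symm_apply_zero _ _]
        · congr 1
          funext j
          congr 1
          rw [hσeq, Equiv.Perm.decomposeFin_symm_apply_succ, Equiv.swap_self,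
            Equiv.refl_apply]
      rw [hword]
      show (ι F : g →ₗ⁅F⁆ UniversalEnvelopingAlgebra F g)
          ((List.ofFn (fun j => a ((π j).succ))).foldl (fun u v => ⁅u, v⁆) (a 0)) = _
      rw [iota_foldl, List.map_ofFn]
      rfl
  rw [hRHS, ML n f (b 0)]
  -- Step 2: the coefficients are all 1 in characteristic p
  have hcoef : ∀ π : Equiv.Perm (Fin n), ∀ k ∈ Finset.range (n+1),
      (-1:A')^k * ((n.choose k : ℕ) : A') * trm f (b 0) π k = trm f (b 0) π k := by
    intro π k hk
    rw [Finset.mem_range] at hk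
    have hF : ((-1:F)^k * (n.choose k : ℕ) = 1) :=
      coeff_one_field (n+1) hp F n rfl k (by omega)
    have hAco : ((-1:A')^k * ((n.choose k : ℕ) : A') = 1) := by
      have := congrArg (algebraMap F A') hF
      simpa [map_mul, map_pow, map_neg, map_one, map_natCast] using this
    rw [hAco, one_mul]
  rw [show (∑ π : Equiv.Perm (Fin n), ∑ k ∈ Finset.range (n+1),
        (-1:A')^k * ((n.choose k : ℕ) : A') * trm f (b 0) π k)
      = ∑ π : Equiv.Perm (Fin n), ∑ k ∈ Finset.range (n+1), trm f (b 0) π k from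
    Finset.sum_congr rfl (fun π _ => Finset.sum_congr rfl (hcoef π))]
  -- Step 3: rewrite the left-hand side
  have e0 : ∀ τ : Equiv.Perm (Fin (n+1)),
      (List.ofFn fun i => (ι F : g →ₗ⁅F⁆ UniversalEnvelopingAlgebra F g) (a (τ i))).prod
        = (List.ofFn (b ∘ τ)).prod := fun τ => rfl
  calc ∑ τ : Equiv.Perm (Fin (n+1)),
        (List.ofFn fun i => (ι F : g →ₗ⁅F⁆ UniversalEnvelopingAlgebra F g) (a (τ i))).prod
      = ∑ τ : Equiv.Perm (Fin (n+1)), (List.ofFn (b ∘ τ)).prod := by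
        exact Finset.sum_congr rfl (fun τ _ => e0 τ)
    _ = ∑ z : Fin (n+1) × Equiv.Perm (Fin n), (List.ofFn (b ∘ (lastEquiv n z))).prod :=
        (Equiv.sum_comp (lastEquiv n) (fun τ => (List.ofFn (b ∘ τ)).prod)).symm
    _ = ∑ k : Fin (n+1), ∑ π : Equiv.Perm (Fin n),
          (List.ofFn (b ∘ (lastEquiv n (k, π)))).prod :=
        Fintype.sum_prod_type (f := fun z : Fin (n+1) × Equiv.Perm (Fin n) =>
          (List.ofFn (b ∘ (lastEquiv n z))).prod)
    _ = ∑ k : Fin (n+1), ∑ π : Equiv.Perm (Fin n), trm f (b 0) π (k:ℕ) := by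
        apply Finset.sum_congr rfl
        intro k _
        apply Finset.sum_congr rfl
        intro π _
        rw [ofFn_lastEquiv n b k π, List.prod_append, List.prod_cons]
        rfl
    _ = ∑ π : Equiv.Perm (Fin n), ∑ k : Fin (n+1), trm f (b 0) π (k:ℕ) := Finset.sum_comm
    _ = ∑ π : Equiv.Perm (Fin n), ∑ k ∈ Finset.range (n+1), trm f (b 0) π k := by
        apply Finset.sum_congr rfl
        intro π _
        exact Fin.sum_univ_eq_sum_range (fun k => trm f (b 0) π k) (n+1)
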